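/- A pattern of shape (m,n) over an alphabet Σ (viewed as a word of length m over the alphabet Σ^n of rows) can occur at most once, counting vertical cyclic positions, in any cyclic array of height exactly m only if it is row-aperiodic; consequently, any (m, N; m, n)_k-sub-perfect map has width N at most M(k^n, m). -/

import Mathlib

open Finset

/-- Vertical cyclic rotation of a pattern of shape `(m,n)` by `r` rows. -/
def vrot {m n k : ℕ} (r : Fin m) (P : Fin m → Fin n → Fin k) : Fin m → Fin n → Fin k :=
  fun i => P (i + r)

/-- A pattern is row-periodic if some nontrivial vertical rotation fixes it. -/
def RowPeriodic {m n k : ℕ} (P : Fin m → Fin n → Fin k) : Prop :=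
  ∃ r : Fin m, (r : ℕ) ≠ 0 ∧ vrot r P = P

/-- `A` is a cyclic `M × N` array in which every `(m,n)`-pattern occurs at most once. -/
def IsSubPerfectMap (M N m n : ℕ) {α : Type*} (A : ZMod M → ZMod N → α) : Prop :=
  ∀ p q : ZMod M × ZMod N,
    (∀ (a : Fin m) (b : Fin n),
        A (p.1 + (a : ℕ)) (p.2 + (b : ℕ)) = A (q.1 + (a : ℕ)) (q.2 + (b : ℕ))) → p = q

/-- Pattern `P` occurs (at some cyclic position) in the array `A`. -/
def Occurs {M N m n k : ℕ} (A : ZMod M → ZMod N → Fin k) (P : Fin m → Fin n → Fin k) : Prop :=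
  ∃ p : ZMod M × ZMod N, ∀ (a : Fin m) (b : Fin n), A (p.1 + (a : ℕ)) (p.2 + (b : ℕ)) = P a b

section Words

variable {β : Type*} [Fintype β] {d : ℕ}

/-- A word `w : ZMod d → β` is aperiodic if no nontrivial rotation fixes it. -/
def Ap {d : ℕ} (w : ZMod d → β) : Prop :=
  ∀ r : ZMod d, (∀ i, w (i + r) = w i) → r = 0

/-- `e : ℕ` is a (vertical) period of `w`. -/
def isPer {d : ℕ} (w : ZMod d → β) (e : ℕ) : Prop :=
  ∀ i, w (i + (e : ZMod d)) = w i

lemma isPer_add {w : ZMod d → β} {e f : ℕ} (he : isPer w e) (hf : isPer w f) :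
    isPer w (e + f) := by
  intro i
  rw [Nat.cast_add, ← add_assoc, hf, he]

lemma isPer_mul {w : ZMod d → β} {e : ℕ} (he : isPer w e) (t : ℕ) :
    isPer w (e * t) := by
  induction t with
  | zero => intro i; simp
  | succ t ih => simpa [Nat.mul_succ] using isPer_add ih he

lemma isPer_of_cast_eq {w : ZMod d → β} {e f : ℕ} (he : isPer w e)
    (h : (f : ZMod d) = (e : ZMod d)) : isPer w f := by
  intro i; rw [h]; exact he i

/-- Existence of a positive period: `d` itself works (if `d > 0`). -/
lemma exists_pos_per (w : ZMod d → β) (hd : 0 < d) : ∃ e, 0 < e ∧ isPer w e :=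
  ⟨d, hd, fun i => by simp [ZMod.natCast_self]⟩

open Classical in
/-- The minimal positive period of a word. -/
noncomputable def minp (w : ZMod d → β) : ℕ :=
  if hd : 0 < d then Nat.find (exists_pos_per w hd) else 0

lemma minp_pos (hd : 0 < d) {w : ZMod d → β} : 0 < minp w := by
  classical
  rw [minp, dif_pos hd]
  exact (Nat.find_spec (exists_pos_per w hd)).1

lemma minp_isPer (hd : 0 < d) {w : ZMod d → β} : isPer w (minp w) := by
  classical
  rw [minp, dif_pos hd]
  exact (Nat.find_spec (exists_pos_per w hd)).2

lemma minp_min (hd : 0 < d) {w : ZMod d → β} {e : ℕ} (h0 : 0 < e) (h : isPer w e) : minp w ≤ e := by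
  classical
  rw [minp, dif_pos hd]
  exact Nat.find_le ⟨h0, h⟩

/-- The set of periods as an additive subgroup of `ZMod d`. -/
def perGroup (w : ZMod d → β) : AddSubgroup (ZMod d) where
  carrier := {r | ∀ i, w (i + r) = w i}
  zero_mem' := by intro i; simp
  add_mem' := by
    intro r s hr hs i
    rw [← add_assoc, hs, hr]
  neg_mem' := by
    intro r hr i
    have := hr (i + -r)
    rw [add_assoc, neg_add_cancel, add_zero] at this
    exact this.symm

lemma minp_dvd_of_isPer (hd : 0 < d) {w : ZMod d → β} {e : ℕ} (h : isPer w e) : minp w ∣ e := by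
  rcases Nat.eq_zero_or_pos e with rfl | he
  · exact dvd_zero _
  set p := minp w with hp
  -- gcd p e is a period via Bezout in ZMod d
  have hpmem : (p : ZMod d) ∈ perGroup w := minp_isPer hd
  have hemem : (e : ZMod d) ∈ perGroup w := h
  have hbez : ((Nat.gcd p e : ℤ) : ZMod d) =
      Nat.gcdA p e • ((p : ℕ) : ZMod d) + Nat.gcdB p e • ((e : ℕ) : ZMod d) := by
    rw [Nat.gcd_eq_gcd_ab]
    push_cast [zsmul_eq_mul]
    ring
  have hg : ((Nat.gcd p e : ℕ) : ZMod d) ∈ perGroup w := by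
    have : ((Nat.gcd p e : ℤ) : ZMod d) ∈ perGroup w := by
      rw [hbez]
      exact AddSubgroup.add_mem _ (AddSubgroup.zsmul_mem _ hpmem _)
        (AddSubgroup.zsmul_mem _ hemem _)
    simpa using this
  have hgper : isPer w (Nat.gcd p e) := hg
  have hgpos : 0 < Nat.gcd p e := Nat.gcd_pos_of_pos_right _ he
  have h1 : p ≤ Nat.gcd p e := minp_min hd hgpos hgper
  have h2 : Nat.gcd p e ≤ p := Nat.le_of_dvd (minp_pos hd) (Nat.gcd_dvd_left _ _)
  have : Nat.gcd p e = p := le_antisymm h2 h1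
  rw [← this]
  exact Nat.gcd_dvd_right _ _

lemma minp_dvd (hd : 0 < d) (w : ZMod d → β) : minp w ∣ d :=
  minp_dvd_of_isPer hd (fun i => by simp [ZMod.natCast_self])

/-- Restriction of a word of length `d` to one of length `e`. -/
def res (e : ℕ) (w : ZMod d → β) : ZMod e → β := fun j => w (j.val : ℕ)

/-- Extension of a word of length `e` dividing `d` to one of length `d`. -/
def ext {e : ℕ} (h : e ∣ d) (u : ZMod e → β) : ZMod d → β :=
  fun i => u (ZMod.castHom h (ZMod e) i)

lemma per_shift {w : ZMod d → β} {e : ℕ} (h : isPer w e) (x : ZMod d) (t : ℕ) :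
    w (x + ((e * t : ℕ) : ZMod d)) = w x := isPer_mul h t x

lemma ext_res (hd : 0 < d) {w : ZMod d → β} {e : ℕ} (hed : e ∣ d) (hper : isPer w e) :
    ext hed (res e w) = w := by
  haveI : NeZero d := ⟨hd.ne'⟩
  have he : 0 < e := Nat.pos_of_dvd_of_pos hed hd
  haveI : NeZero e := ⟨he.ne'⟩
  funext i
  have hcast : ((ZMod.castHom hed (ZMod e)) i) = ((i.val : ℕ) : ZMod e) := by
    conv_lhs => rw [← ZMod.natCast_zmod_val i]
    rw [map_natCast]
  have hkey : w i = w ((i.val % e : ℕ) : ZMod d) := by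
    conv_lhs => rw [← ZMod.natCast_zmod_val i]
    have hv : ((i.val : ℕ) : ZMod d) =
        ((i.val % e : ℕ) : ZMod d) + ((e * (i.val / e) : ℕ) : ZMod d) := by
      rw [← Nat.cast_add, Nat.mod_add_div]
    rw [hv, per_shift hper]
  show w ((((ZMod.castHom hed (ZMod e)) i).val : ℕ) : ZMod d) = w i
  rw [hcast, ZMod.val_natCast, hkey]

lemma res_ext (hd : 0 < d) {e : ℕ} (hed : e ∣ d) (u : ZMod e → β) (he : 0 < e) :
    res e (ext hed u) = u := by
  haveI : NeZero e := ⟨he.ne'⟩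
  funext j
  show u ((ZMod.castHom hed (ZMod e)) ((j.val : ℕ) : ZMod d)) = u j
  rw [map_natCast, ZMod.natCast_zmod_val]

lemma isPer_ext {e : ℕ} (hed : e ∣ d) (u : ZMod e → β) : isPer (ext hed u) e := by
  intro i
  show u ((ZMod.castHom hed (ZMod e)) (i + (e : ZMod d))) = u _
  rw [map_add, map_natCast, ZMod.natCast_self, add_zero]

lemma cast_surj {e : ℕ} (hed : e ∣ d) (he : 0 < e) :
    Function.Surjective (ZMod.castHom hed (ZMod e)) := by
  haveI : NeZero e := ⟨he.ne'⟩
  intro j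
  exact ⟨((j.val : ℕ) : ZMod d), by rw [map_natCast, ZMod.natCast_zmod_val]⟩

lemma minp_ext (hd : 0 < d) {e : ℕ} (hed : e ∣ d) (he : 0 < e) {u : ZMod e → β} (hu : Ap u) :
    minp (ext hed u) = e := by
  have h1 : minp (ext hed u) ∣ e := minp_dvd_of_isPer hd (isPer_ext hed u)
  set p := minp (ext hed u) with hp
  have hpper : isPer (ext hed u) p := minp_isPer hd
  have : ∀ j : ZMod e, u (j + (p : ZMod e)) = u j := by
    intro j
    obtain ⟨i, rfl⟩ := cast_surj hed he j
    have := hpper i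
    show u _ = u _
    rw [← map_natCast (ZMod.castHom hed (ZMod e)) p, ← map_add]
    exact this
  have h2 : (p : ZMod e) = 0 := hu _ this
  have h3 : e ∣ p := by
    haveI : NeZero e := ⟨he.ne'⟩
    exact (ZMod.natCast_eq_zero_iff p e).mp h2
  exact Nat.dvd_antisymm h1 h3

lemma ap_res (hd : 0 < d) {w : ZMod d → β} : Ap (res (minp w) w) := by
  intro r hr
  have heper : isPer w (minp w) := minp_isPer hd
  have hed : minp w ∣ d := minp_dvd hd w
  have hepos : 0 < minp w := minp_pos hd
  haveI : NeZero (minp w) := ⟨hepos.ne'⟩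
  have hwe : ext hed (res (minp w) w) = w := ext_res hd hed heper
  have hrper : isPer w r.val := by
    intro i
    have h1 := congrFun hwe (i + ((r.val : ℕ) : ZMod d))
    have h2 := congrFun hwe i
    rw [← h1, ← h2]
    show res (minp w) w ((ZMod.castHom hed (ZMod (minp w))) (i + ((r.val : ℕ) : ZMod d))) =
      res (minp w) w ((ZMod.castHom hed (ZMod (minp w))) i)
    rw [map_add, map_natCast, ZMod.natCast_zmod_val]
    exact hr _
  have hdvd : minp w ∣ r.val := minp_dvd_of_isPer hd hrper
  have hr0 : r.val = 0 := Nat.eq_zero_of_dvd_of_lt hdvd (ZMod.val_lt r)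
  exact (ZMod.val_eq_zero r).mp hr0

/-- Number of aperiodic words of length `d`. -/
noncomputable def apCard (β : Type*) [Fintype β] (d : ℕ) : ℕ :=
  Nat.card {w : ZMod d → β // Ap w}

lemma card_fiber_eq (hd : 0 < d) (e : ℕ) (hed : e ∣ d) (he : 0 < e) :
    Nat.card {w : ZMod d → β // minp w = e} = apCard β e := by
  apply Nat.card_eq_of_bijective
    (fun w => (⟨res e w.1, by
      have := ap_res hd (w := w.1)
      rwa [w.2] at this⟩ : {u : ZMod e → β // Ap u}))
  constructor
  · rintro ⟨w, hw⟩ ⟨w', hw'⟩ h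
    have h' : res e w = res e w' := congrArg Subtype.val h
    have h1 : ext hed (res e w) = w := ext_res hd hed (hw ▸ minp_isPer hd)
    have h2 : ext hed (res e w') = w' := ext_res hd hed (hw' ▸ minp_isPer hd)
    apply Subtype.ext
    show w = w'
    rw [← h1, h', h2]
  · rintro ⟨u, hu⟩
    refine ⟨⟨ext hed u, minp_ext hd hed he hu⟩, ?_⟩
    apply Subtype.ext
    exact res_ext hd hed u he

lemma sum_apCard (d : ℕ) (hd : 0 < d) :
    ∑ e ∈ d.divisors, apCard β e = (Fintype.card β) ^ d := by
  classical
  haveI : NeZero d := ⟨hd.ne'⟩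
  have key : (Finset.univ : Finset (ZMod d → β)).card =
      ∑ e ∈ d.divisors, (Finset.univ.filter (fun w : ZMod d → β => minp w = e)).card := by
    apply Finset.card_eq_sum_card_fiberwise
    intro w _
    rw [Finset.mem_coe, Nat.mem_divisors]
    exact ⟨minp_dvd hd w, hd.ne'⟩
  have hcard : (Finset.univ : Finset (ZMod d → β)).card = (Fintype.card β) ^ d := by
    rw [Finset.card_univ, Fintype.card_fun, ZMod.card]
  rw [← hcard, key]
  apply Finset.sum_congr rfl
  intro e hee
  rw [Nat.mem_divisors] at hee
  have he : 0 < e := Nat.pos_of_dvd_of_pos hee.1 hd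
  rw [← card_fiber_eq hd e hee.1 he, Nat.card_eq_fintype_card, Fintype.card_subtype]

/-- Möbius-inverted formula (as an inequality is all we need, but we get equality). -/
lemma apCard_eq (d : ℕ) (hd : 0 < d) :
    (apCard β d : ℚ) = ∑ e ∈ d.divisors,
      (ArithmeticFunction.moebius (d / e) : ℚ) * ((Fintype.card β : ℚ)) ^ e := by
  classical
  have H : ∀ n > 0, ∑ i ∈ n.divisors, ((apCard β i : ℚ)) = ((Fintype.card β : ℚ)) ^ n := by
    intro n hn
    rw [← Nat.cast_sum, sum_apCard n hn, Nat.cast_pow]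
  have := (ArithmeticFunction.sum_eq_iff_sum_smul_moebius_eq
    (f := fun i => (apCard β i : ℚ)) (g := fun n => ((Fintype.card β : ℚ)) ^ n)).mp H d hd
  rw [← this, Nat.sum_divisorsAntidiagonal' (f := fun a b =>
    (ArithmeticFunction.moebius a : ℤ) • ((Fintype.card β : ℚ)) ^ b)]
  apply Finset.sum_congr rfl
  intro e _
  rw [zsmul_eq_mul]

end Words

theorem deBruijnRing_width_bound (m n N k : ℕ) (hm : 2 ≤ m) (hn : 2 ≤ n) (hk : 2 ≤ k)
    (hN : 1 ≤ N) (A : ZMod m → ZMod N → Fin k) (hA : IsSubPerfectMap m N m n A) :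
    (∀ P : Fin m → Fin n → Fin k, Occurs A P → ¬ RowPeriodic P) ∧
    (N : ℚ) ≤ (∑ d ∈ m.divisors,
        (ArithmeticFunction.moebius (m / d) : ℚ) * ((k : ℚ) ^ n) ^ d) / m := by
  have hm0 : 0 < m := lt_of_lt_of_le two_pos hm
  haveI : NeZero m := ⟨hm0.ne'⟩
  haveI : NeZero N := ⟨(lt_of_lt_of_le one_pos hN).ne'⟩
  constructor
  · -- part 1
    rintro P ⟨p, hP⟩ ⟨r, hr0, hrot⟩
    have key : ∀ (a : Fin m) (b : Fin n),
        A ((p.1 + (r : ℕ)) + (a : ℕ)) (p.2 + (b : ℕ)) = A (p.1 + (a : ℕ)) (p.2 + (b : ℕ)) := by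
      intro a b
      have h1 : (p.1 + (r : ℕ)) + (a : ℕ) = p.1 + (((a + r : Fin m) : ℕ) : ZMod m) := by
        have : (((a + r : Fin m) : ℕ) : ZMod m) = ((a : ℕ) + (r : ℕ) : ℕ) := by
          rw [Fin.val_add, ZMod.natCast_mod]
        rw [this]
        push_cast
        ring
      rw [h1, hP (a + r) b, hP a b]
      have := congrFun (congrFun hrot a) b
      rw [← this]
      rfl
    have := hA (p.1 + (r : ℕ), p.2) p key
    have h2 : p.1 + (r : ℕ) = p.1 := congrArg Prod.fst this
    have h3 : ((r : ℕ) : ZMod m) = 0 := by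
      have h4 : p.1 + ((r : ℕ) : ZMod m) = p.1 + 0 := by rw [add_zero]; exact h2
      exact add_left_cancel h4
    rw [ZMod.natCast_eq_zero_iff] at h3
    exact hr0 (Nat.eq_zero_of_dvd_of_lt h3 r.isLt)
  · -- part 2
    have hinj : Function.Injective (fun p : ZMod m × ZMod N =>
        (⟨fun i => fun b => A (p.1 + i) (p.2 + (b : ℕ)), by
          intro r hr
          have key : ∀ (a : Fin m) (b : Fin n),
              A ((p.1 + r) + (a : ℕ)) (p.2 + (b : ℕ)) = A (p.1 + (a : ℕ)) (p.2 + (b : ℕ)) := by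
            intro a b
            have := congrFun (hr (p.1 + (a : ℕ) - p.1)) b
            simpa [add_assoc, add_comm, add_left_comm] using this
          have := hA (p.1 + r, p.2) p key
          have h2 : p.1 + r = p.1 := congrArg Prod.fst this
          calc r = (p.1 + r) - p.1 := by ring
          _ = 0 := by rw [h2]; ring⟩ :
          {w : ZMod m → (Fin n → Fin k) // Ap w})) := by
      intro p q hpq
      have hw : ∀ i : ZMod m, ∀ b : Fin n,
          A (p.1 + i) (p.2 + (b : ℕ)) = A (q.1 + i) (q.2 + (b : ℕ)) := by
        intro i b
        exact congrFun (congrFun (congrArg Subtype.val hpq) i) b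
      exact hA p q (fun a b => hw ((a : ℕ) : ZMod m) b)
    have hcard : m * N ≤ apCard (Fin n → Fin k) m := by
      calc m * N = Nat.card (ZMod m × ZMod N) := by
            rw [Nat.card_prod, Nat.card_zmod, Nat.card_zmod]
      _ ≤ apCard (Fin n → Fin k) m := Nat.card_le_card_of_injective _ hinj
    have hrw : (apCard (Fin n → Fin k) m : ℚ) = ∑ d ∈ m.divisors,
        (ArithmeticFunction.moebius (m / d) : ℚ) * ((k : ℚ) ^ n) ^ d := by
      rw [apCard_eq m hm0]
      apply Finset.sum_congr rfl
      intro e _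
      have hc : (Fintype.card (Fin n → Fin k) : ℚ) = (k : ℚ) ^ n := by
        rw [Fintype.card_fun, Fintype.card_fin, Fintype.card_fin]
        push_cast; ring
      rw [hc]
    rw [le_div_iff₀ (by exact_mod_cast hm0)]
    rw [← hrw]
    calc (N : ℚ) * m = ((m * N : ℕ) : ℚ) := by push_cast; ring
    _ ≤ (apCard (Fin n → Fin k) m : ℚ) := by exact_mod_cast hcard
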